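/- Let a_1,…,a_n be nonzero vectors in ℂ^d with relaxation parameters ω_1,…,ω_n ∈ (0,2), and let R = P_{a_n}^{ω_n} ∘ ⋯ ∘ P_{a_1}^{ω_1} be the composition of the corresponding relaxed projections. Let C be a linear operator on ℂ^d with ‖C x‖ ≤ ‖x‖ for all x that has the asymptotic-fixing property. Then the operator T = C ∘ R also has the asymptotic-fixing property. -/

import Mathlib

/-- The relaxed projection `P_a^ω x = x - ω (⟨x,a⟩/‖a‖²) a` associated to a vector `a ∈ ℂ^d`
and a real relaxation parameter `ω`. -/
noncomputable def relaxProj {d : ℕ} (a : EuclideanSpace ℂ (Fin d)) (ω : ℝ)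
    (x : EuclideanSpace ℂ (Fin d)) : EuclideanSpace ℂ (Fin d) :=
  x - ((ω : ℂ) * ((inner ℂ a x : ℂ) / (‖a‖ : ℂ) ^ 2)) • a

/-- A map `T` on `ℂ^d` has the asymptotic-fixing property if for every sequence `(x_k)` with
`‖x_k‖ ≤ 1` and `‖T x_k‖ → 1`, one has `(I - T) x_k → 0`. -/
def AsympFix {d : ℕ} (T : EuclideanSpace ℂ (Fin d) → EuclideanSpace ℂ (Fin d)) : Prop :=
  ∀ x : ℕ → EuclideanSpace ℂ (Fin d), (∀ k, ‖x k‖ ≤ 1) →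
    Filter.Tendsto (fun k => ‖T (x k)‖) Filter.atTop (nhds 1) →
    Filter.Tendsto (fun k => x k - T (x k)) Filter.atTop (nhds 0)

variable {d : ℕ}

lemma norm_sub_relaxProj_sq (a x : EuclideanSpace ℂ (Fin d)) (ha : a ≠ 0) {ω : ℝ} (hω0 : 0 ≤ ω) :
    ‖x - relaxProj a ω x‖^2 = ω^2 * (‖(inner ℂ a x : ℂ)‖^2 / ‖a‖^2) := by
  have hxa : x - relaxProj a ω x = ((ω : ℂ) * ((inner ℂ a x : ℂ) / (‖a‖ : ℂ) ^ 2)) • a := by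
    simp [relaxProj]
  have hna : (0:ℝ) < ‖a‖ := norm_pos_iff.mpr ha
  rw [hxa, norm_smul]
  simp only [norm_mul, norm_div, Complex.norm_real, norm_pow, Real.norm_eq_abs,
    abs_of_nonneg hω0, abs_of_nonneg hna.le]
  field_simp

lemma norm_relaxProj_sq (a x : EuclideanSpace ℂ (Fin d)) (ha : a ≠ 0) {ω : ℝ} (hω0 : 0 ≤ ω) :
    ‖relaxProj a ω x‖^2 = ‖x‖^2 - (ω*(2-ω)) * (‖(inner ℂ a x : ℂ)‖^2 / ‖a‖^2) := by
  have hna : (0:ℝ) < ‖a‖ := norm_pos_iff.mpr ha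
  have h := norm_sub_sq (𝕜 := ℂ) x (((ω : ℂ) * ((inner ℂ a x : ℂ) / (‖a‖ : ℂ) ^ 2)) • a)
  rw [show relaxProj a ω x = x - ((ω : ℂ) * ((inner ℂ a x : ℂ) / (‖a‖ : ℂ) ^ 2)) • a from rfl, h]
  have hinner : (inner ℂ x (((ω : ℂ) * ((inner ℂ a x : ℂ) / (‖a‖ : ℂ) ^ 2)) • a) : ℂ)
      = ((ω : ℂ) * ((inner ℂ a x : ℂ) / (‖a‖ : ℂ) ^ 2)) * (starRingEnd ℂ) (inner ℂ a x : ℂ) := by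
    rw [inner_smul_right, inner_conj_symm]
  have hre : ((ω : ℂ) * ((inner ℂ a x : ℂ) / (‖a‖ : ℂ) ^ 2) * (starRingEnd ℂ) (inner ℂ a x : ℂ))
      = ((ω * (‖(inner ℂ a x : ℂ)‖^2 / ‖a‖^2) : ℝ) : ℂ) := by
    have hz : (inner ℂ a x : ℂ) * (starRingEnd ℂ) (inner ℂ a x : ℂ)
        = ((‖(inner ℂ a x : ℂ)‖^2 : ℝ) : ℂ) := by
      rw [Complex.mul_conj, Complex.normSq_eq_norm_sq]
    calc (ω : ℂ) * ((inner ℂ a x : ℂ) / (‖a‖ : ℂ) ^ 2) * (starRingEnd ℂ) (inner ℂ a x : ℂ)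
        = (ω : ℂ) / (‖a‖ : ℂ)^2 * ((inner ℂ a x : ℂ) * (starRingEnd ℂ) (inner ℂ a x : ℂ)) := by ring
      _ = (ω : ℂ) / (‖a‖ : ℂ)^2 * ((‖(inner ℂ a x : ℂ)‖^2 : ℝ) : ℂ) := by rw [hz]
      _ = ((ω * (‖(inner ℂ a x : ℂ)‖^2 / ‖a‖^2) : ℝ) : ℂ) := by push_cast; ring
  have hsmul : ‖(((ω : ℂ) * ((inner ℂ a x : ℂ) / (‖a‖ : ℂ) ^ 2)) • a)‖^2
      = ω^2 * (‖(inner ℂ a x : ℂ)‖^2 / ‖a‖^2) := by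
    have hxa : x - relaxProj a ω x = ((ω : ℂ) * ((inner ℂ a x : ℂ) / (‖a‖ : ℂ) ^ 2)) • a := by
      simp [relaxProj]
    rw [← hxa]; exact norm_sub_relaxProj_sq a x ha hω0
  rw [hinner, hre, hsmul]
  simp only [RCLike.re_to_complex, Complex.ofReal_re]
  ring

lemma relaxProj_nonexp (a : EuclideanSpace ℂ (Fin d)) (ha : a ≠ 0) {ω : ℝ}
    (hω : ω ∈ Set.Ioo (0:ℝ) 2) (x : EuclideanSpace ℂ (Fin d)) :
    ‖relaxProj a ω x‖ ≤ ‖x‖ := by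
  have h := norm_relaxProj_sq a x ha hω.1.le
  have hω' : 0 < ω*(2-ω) := by nlinarith [hω.1, hω.2]
  have hter : 0 ≤ (ω*(2-ω)) * (‖(inner ℂ a x : ℂ)‖^2 / ‖a‖^2) := by positivity
  have hsq : ‖relaxProj a ω x‖^2 ≤ ‖x‖^2 := by linarith
  exact (pow_le_pow_iff_left₀ (norm_nonneg _) (norm_nonneg _) two_ne_zero).mp hsq

lemma tendsto_zero_of_norm_sq {v : ℕ → EuclideanSpace ℂ (Fin d)}
    (h : Filter.Tendsto (fun k => ‖v k‖^2) Filter.atTop (nhds 0)) :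
    Filter.Tendsto v Filter.atTop (nhds 0) := by
  rw [tendsto_zero_iff_norm_tendsto_zero]
  simpa [Function.comp_def] using (Real.continuous_sqrt.tendsto 0).comp h

lemma asympFix_relaxProj (a : EuclideanSpace ℂ (Fin d)) (ha : a ≠ 0) {ω : ℝ}
    (hω : ω ∈ Set.Ioo (0:ℝ) 2) : AsympFix (relaxProj a ω) := by
  intro x hb htend
  apply tendsto_zero_of_norm_sq
  have key : ∀ k, ‖x k - relaxProj a ω (x k)‖^2
      = (ω/(2-ω)) * (‖x k‖^2 - ‖relaxProj a ω (x k)‖^2) := by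
    intro k
    set t := ‖(inner ℂ a (x k) : ℂ)‖^2 / ‖a‖^2 with ht
    rw [norm_sub_relaxProj_sq a (x k) ha hω.1.le, norm_relaxProj_sq a (x k) ha hω.1.le, ← ht]
    have h2 : (2:ℝ) - ω ≠ 0 := by linarith [hω.2]
    field_simp
    ring
  have hdiff : Filter.Tendsto (fun k => ‖x k‖^2 - ‖relaxProj a ω (x k)‖^2) Filter.atTop (nhds 0) := by
    refine squeeze_zero (g := fun k => 1 - ‖relaxProj a ω (x k)‖^2) ?_ ?_ ?_
    · intro k
      have := norm_relaxProj_sq a (x k) ha hω.1.le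
      have hter : 0 ≤ (ω*(2-ω)) * (‖(inner ℂ a (x k) : ℂ)‖^2 / ‖a‖^2) := by
        have : 0 < ω*(2-ω) := by nlinarith [hω.1, hω.2]
        positivity
      linarith
    · intro k
      have h1 : ‖x k‖^2 ≤ 1 := by nlinarith [hb k, norm_nonneg (x k)]
      linarith
    · have : Filter.Tendsto (fun k => ‖relaxProj a ω (x k)‖^2) Filter.atTop (nhds 1) := by
        simpa using htend.pow 2
      simpa using (tendsto_const_nhds (x := (1:ℝ)) (f := Filter.atTop (α := ℕ))).sub this
  simp only [key]
  simpa using hdiff.const_mul (ω/(2-ω))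

lemma asympFix_comp {S T : EuclideanSpace ℂ (Fin d) → EuclideanSpace ℂ (Fin d)}
    (hSn : ∀ x, ‖S x‖ ≤ ‖x‖) (hTn : ∀ x, ‖T x‖ ≤ ‖x‖)
    (hS : AsympFix S) (hT : AsympFix T) : AsympFix (fun x => T (S x)) := by
  intro x hb htend
  have hSb : ∀ k, ‖S (x k)‖ ≤ 1 := fun k => le_trans (hSn _) (hb k)
  have hSnorm : Filter.Tendsto (fun k => ‖S (x k)‖) Filter.atTop (nhds 1) :=
    tendsto_of_tendsto_of_tendsto_of_le_of_le htend tendsto_const_nhds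
      (fun k => hTn _) hSb
  have h1 := hS x hb hSnorm
  have h2 := hT (fun k => S (x k)) hSb htend
  have := h1.add h2
  simpa using this

lemma asympFix_id : AsympFix (fun x : EuclideanSpace ℂ (Fin d) => x) := by
  intro x hb htend
  simpa using tendsto_const_nhds

lemma foldl_relaxProj_good {n : ℕ} (a : Fin n → EuclideanSpace ℂ (Fin d)) (ha : ∀ i, a i ≠ 0)
    (ω : Fin n → ℝ) (hω : ∀ i, ω i ∈ Set.Ioo (0 : ℝ) 2) (l : List (Fin n)) :
    (∀ x, ‖l.foldl (fun y i => relaxProj (a i) (ω i) y) x‖ ≤ ‖x‖) ∧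
      AsympFix (fun x => l.foldl (fun y i => relaxProj (a i) (ω i) y) x) := by
  induction l with
  | nil => exact ⟨fun x => le_rfl, asympFix_id⟩
  | cons i l ih =>
    have hfold : ∀ x, (i :: l).foldl (fun y j => relaxProj (a j) (ω j) y) x
        = l.foldl (fun y j => relaxProj (a j) (ω j) y) (relaxProj (a i) (ω i) x) :=
      fun x => List.foldl_cons
    constructor
    · intro x
      rw [hfold]
      exact le_trans (ih.1 _) (relaxProj_nonexp (a i) (ha i) (hω i) x)
    · have := asympFix_comp (S := relaxProj (a i) (ω i))
        (T := fun x => l.foldl (fun y j => relaxProj (a j) (ω j) y) x)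
        (relaxProj_nonexp (a i) (ha i) (hω i)) ih.1
        (asympFix_relaxProj (a i) (ha i) (hω i)) ih.2
      have heq : (fun x => (i :: l).foldl (fun y j => relaxProj (a j) (ω j) y) x)
          = fun x => l.foldl (fun y j => relaxProj (a j) (ω j) y) (relaxProj (a i) (ω i) x) :=
        funext hfold
      rw [heq]
      exact this


/-- if `R` is a composition of relaxed projections with parameters in `(0,2)` and
`C` is a linear contraction with the asymptotic-fixing property, then `C ∘ R` also has the
asymptotic-fixing property. -/
theorem stmt_4 {d n : ℕ} (a : Fin n → EuclideanSpace ℂ (Fin d)) (ha : ∀ i, a i ≠ 0)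
    (ω : Fin n → ℝ) (hω : ∀ i, ω i ∈ Set.Ioo (0 : ℝ) 2)
    (R : EuclideanSpace ℂ (Fin d) → EuclideanSpace ℂ (Fin d))
    (hR : ∀ x, R x = (List.finRange n).foldl (fun y i => relaxProj (a i) (ω i) y) x)
    (C : EuclideanSpace ℂ (Fin d) →ₗ[ℂ] EuclideanSpace ℂ (Fin d))
    (hC : ∀ x, ‖C x‖ ≤ ‖x‖) (hCfix : AsympFix (⇑C)) :
    AsympFix (fun x => C (R x)) := by
  obtain ⟨hFn, hFfix⟩ := foldl_relaxProj_good a ha ω hω (List.finRange n)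
  have heq : (fun x => C (R x))
      = fun x => C ((List.finRange n).foldl (fun y i => relaxProj (a i) (ω i) y) x) :=
    funext fun x => by rw [hR]
  rw [heq]
  exact asympFix_comp hFn hC hFfix hCfix
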